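/- With the notation of the column-row-wise coded exposure setup, let S be a positive integer and let Ω_S = { x ∈ ℂ^N : ‖x‖₀ ≤ S and ‖x‖₂ = 1 }. Then for every fixed choice of signs r_u^k(t) ∈ {−1,+1} and every x ∈ Ω_S, the spectral norm of the block-diagonal matrix satisfies ‖Ḟ(x)‖₂ ≤ √(S/M)·max_{1≤k≤K} ‖R^k‖₂, where R^k = T^{−1/2}·[r_1^k, r_2^k, …, r_{Nx}^k] ∈ ℝ^{T×Nx} is the matrix whose u-th column is T^{−1/2}·(r_u^k(1),…,r_u^k(T))ᵀ. -/

import Mathlib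

open Matrix Finset

namespace HFVcr

/-- The stacked index `m(t,u,v) = (v−1)·Nx·T + (u−1)·T + (t−1)` (with `0`-based
`Fin` indices) identifying the coordinates of `ℂ^N`, `N = T·Nx·Ny`, with triples. -/
def mIdx {T Nx Ny : ℕ} (p : Fin T × Fin Nx × Fin Ny) : ℕ :=
  p.2.2.val * Nx * T + p.2.1.val * T + p.1.val

/-- The unitary `N`-point DFT matrix, `N = T·Nx·Ny`, with both coordinates of `ℂ^N`
indexed by triples via the stacked index `mIdx`:
`Ψ(m,i) = N^{-1/2}·exp(−j·2π·(i−1)·m/N)`. -/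
noncomputable def dft (T Nx Ny : ℕ) :
    Matrix (Fin T × Fin Nx × Fin Ny) (Fin T × Fin Nx × Fin Ny) ℂ :=
  Matrix.of fun p q =>
    (1 / (Real.sqrt ((T : ℝ) * Nx * Ny) : ℂ)) *
      Complex.exp (-(Complex.I * (2 * (Real.pi : ℂ) * (mIdx q : ℕ) * (mIdx p : ℕ)) /
        ((T : ℂ) * Nx * Ny)))

/-- Squared Euclidean norm `‖f‖₂²` of a vector. -/
noncomputable def euclNormSq {ι : Type*} [Fintype ι] (f : ι → ℂ) : ℝ :=
  ∑ i, ‖f i‖ ^ 2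

/-- The submatrix `Ψ_{u,v} ∈ ℂ^{T×N}` of the DFT matrix formed by the rows
`m(t,u,v)`, `1 ≤ t ≤ T`. -/
noncomputable def Psiuv (T Nx Ny : ℕ) (u : Fin Nx) (v : Fin Ny) :
    Matrix (Fin T) (Fin T × Fin Nx × Fin Ny) ℂ :=
  Matrix.of fun t j => dft T Nx Ny (t, u, v) j

/-- `ḟ_{u,v}^k(x) = R_u^k · Ψ_{u,v} · x ∈ ℂ^T`. -/
noncomputable def fdot {T Nx Ny K : ℕ} (r : Fin Nx → Fin K → Fin T → ℝ)
    (u : Fin Nx) (v : Fin Ny) (k : Fin K) (x : Fin T × Fin Nx × Fin Ny → ℂ) :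
    Fin T → ℂ :=
  fun t => (r u k t : ℂ) * (Psiuv T Nx Ny u v *ᵥ x) t

/-- `Ḟ_v^k(x) ∈ ℂ^{T×Nx}`: the matrix whose `u`-th column is `ḟ_{u,v}^k(x)`. -/
noncomputable def Fvk {T Nx Ny K : ℕ} (r : Fin Nx → Fin K → Fin T → ℝ)
    (v : Fin Ny) (k : Fin K) (x : Fin T × Fin Nx × Fin Ny → ℂ) :
    Matrix (Fin T) (Fin Nx) ℂ :=
  Matrix.of fun t u => fdot r u v k x t

/-- `Ḟ(x) = K^{−1/2}·blockdiag((Ḟ_v^k(x))^*) ∈ ℂ^{M×K·T·Ny}`, with blocks indexed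
by the pairs `(v,k)`. -/
noncomputable def Fdot {T Nx Ny K : ℕ} (r : Fin Nx → Fin K → Fin T → ℝ)
    (x : Fin T × Fin Nx × Fin Ny → ℂ) :
    Matrix (Fin Nx × (Fin Ny × Fin K)) (Fin T × (Fin Ny × Fin K)) ℂ :=
  (((1 / Real.sqrt K : ℝ) : ℂ)) •
    Matrix.blockDiagonal (fun vk : Fin Ny × Fin K => (Fvk r vk.1 vk.2 x)ᴴ)


/-- The random row-modulation matrix `R^k = T^{−1/2}·[r_1^k, …, r_{Nx}^k] ∈ ℝ^{T×Nx}`,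
whose `u`-th column is `T^{−1/2}·(r_u^k(1),…,r_u^k(T))ᵀ`. -/
noncomputable def RkMat {T Nx K : ℕ} (r : Fin Nx → Fin K → Fin T → ℝ) (k : Fin K) :
    Matrix (Fin T) (Fin Nx) ℝ :=
  Matrix.of fun t u => (1 / Real.sqrt T) * r u k t

/-- The spectral norm (largest singular value) of a matrix: the operator norm of the
induced linear map between Euclidean spaces. -/
noncomputable def specNorm {m n : Type*} [Fintype m] [Fintype n] [DecidableEq n]
    (A : Matrix m n ℂ) : ℝ :=
  ‖LinearMap.toContinuousLinearMap (Matrix.toEuclideanLin A)‖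

/-! ### Auxiliary lemmas -/

open scoped Matrix.Norms.L2Operator

lemma specNorm_eq_norm {m n : Type*} [Fintype m] [Fintype n] [DecidableEq n]
    (A : Matrix m n ℂ) : specNorm A = ‖A‖ := rfl

lemma sq_norm_esymm {n : Type*} [Fintype n] (w : n → ℂ) :
    ‖(WithLp.equiv 2 (n → ℂ)).symm w‖ ^ 2 = ∑ i, ‖w i‖ ^ 2 := by
  rw [EuclideanSpace.norm_eq, Real.sq_sqrt (by positivity)]
  rfl

/-- Bound the `L²` operator norm of a matrix via an entrywise sum-of-squares bound. -/
lemma l2_opNorm_le_of_sq {m n : Type*} [Fintype m] [Fintype n] [DecidableEq n]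
    (A : Matrix m n ℂ) {C : ℝ} (hC : 0 ≤ C)
    (h : ∀ w : n → ℂ, ∑ j, ‖(A *ᵥ w) j‖ ^ 2 ≤ C ^ 2 * ∑ i, ‖w i‖ ^ 2) :
    ‖A‖ ≤ C := by
  rw [Matrix.l2_opNorm_def]
  refine ContinuousLinearMap.opNorm_le_bound _ hC fun y => ?_
  have e1 : ‖(Matrix.toEuclideanLin (𝕜 := ℂ) (m := m) (n := n)).trans
      LinearMap.toContinuousLinearMap A y‖ ^ 2 = ∑ j, ‖(A *ᵥ fun i => y i) j‖ ^ 2 :=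
    sq_norm_esymm _
  have e2 : ‖y‖ ^ 2 = ∑ i, ‖(fun i => y i) i‖ ^ 2 := sq_norm_esymm _
  have h1 : ‖(Matrix.toEuclideanLin (𝕜 := ℂ) (m := m) (n := n)).trans
      LinearMap.toContinuousLinearMap A y‖ ^ 2 ≤ (C * ‖y‖) ^ 2 := by
    rw [e1, mul_pow, e2]
    exact h _
  nlinarith [norm_nonneg ((Matrix.toEuclideanLin (𝕜 := ℂ) (m := m) (n := n)).trans
      LinearMap.toContinuousLinearMap A y), mul_nonneg hC (norm_nonneg y)]

lemma l2_opNorm_diagonal_le {n : Type*} [Fintype n] [DecidableEq n]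
    (d : n → ℂ) (h : ∀ i, ‖d i‖ ≤ 1) : ‖Matrix.diagonal d‖ ≤ 1 := by
  refine l2_opNorm_le_of_sq _ zero_le_one fun w => ?_
  rw [one_pow, one_mul]
  refine Finset.sum_le_sum fun i _ => ?_
  rw [Matrix.mulVec_diagonal, norm_mul, mul_pow]
  calc ‖d i‖ ^ 2 * ‖w i‖ ^ 2 ≤ 1 * ‖w i‖ ^ 2 := by
        have h2 : ‖d i‖ ^ 2 ≤ 1 := by nlinarith [h i, norm_nonneg (d i)]
        exact mul_le_mul_of_nonneg_right h2 (by positivity)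
    _ = ‖w i‖ ^ 2 := one_mul _

lemma blockDiagonal_mulVec_eq {α m n : Type*} [Fintype α] [DecidableEq α]
    [Fintype m] [Fintype n] (M : α → Matrix m n ℂ) (w : n × α → ℂ) (a : m) (i : α) :
    (Matrix.blockDiagonal M *ᵥ w) (a, i) = (M i *ᵥ fun b => w (b, i)) a := by
  simp only [Matrix.mulVec, dotProduct, Fintype.sum_prod_type, Matrix.blockDiagonal_apply,
    ite_mul, zero_mul]
  rw [Finset.sum_comm]
  simp

lemma l2_opNorm_blockDiagonal_le {α m n : Type*} [Fintype α] [DecidableEq α]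
    [Fintype m] [Fintype n] [DecidableEq n]
    (M : α → Matrix m n ℂ) {C : ℝ} (hC : 0 ≤ C) (h : ∀ i, ‖M i‖ ≤ C) :
    ‖Matrix.blockDiagonal M‖ ≤ C := by
  refine l2_opNorm_le_of_sq _ hC fun w => ?_
  have key : ∀ i : α, ∑ a, ‖(M i *ᵥ fun b => w (b, i)) a‖ ^ 2
      ≤ C ^ 2 * ∑ b, ‖w (b, i)‖ ^ 2 := by
    intro i
    have h1 : ‖(WithLp.equiv 2 (m → ℂ)).symm (M i *ᵥ fun b => w (b, i))‖
        ≤ ‖M i‖ * ‖(WithLp.equiv 2 (n → ℂ)).symm fun b => w (b, i)‖ :=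
      (M i).l2_opNorm_mulVec ((WithLp.equiv 2 (n → ℂ)).symm fun b => w (b, i))
    have h2 : ‖(WithLp.equiv 2 (m → ℂ)).symm (M i *ᵥ fun b => w (b, i))‖
        ≤ C * ‖(WithLp.equiv 2 (n → ℂ)).symm fun b => w (b, i)‖ := by
      refine h1.trans ?_
      exact mul_le_mul_of_nonneg_right (h i) (norm_nonneg _)
    have h3 := pow_le_pow_left₀ (norm_nonneg _) h2 2
    rw [sq_norm_esymm, mul_pow, sq_norm_esymm] at h3
    exact h3
  calc ∑ j : m × α, ‖(Matrix.blockDiagonal M *ᵥ w) j‖ ^ 2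
      = ∑ i : α, ∑ a : m, ‖(M i *ᵥ fun b => w (b, i)) a‖ ^ 2 := by
        rw [Fintype.sum_prod_type, Finset.sum_comm]
        exact Finset.sum_congr rfl fun i _ => Finset.sum_congr rfl fun a _ => by
          rw [blockDiagonal_mulVec_eq]
    _ ≤ ∑ i : α, C ^ 2 * ∑ b, ‖w (b, i)‖ ^ 2 := Finset.sum_le_sum fun i _ => key i
    _ = C ^ 2 * ∑ j : n × α, ‖w j‖ ^ 2 := by
        rw [← Finset.mul_sum, Fintype.sum_prod_type, Finset.sum_comm]

/-- The phase angle appearing in the factorization of the DFT entries. -/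
noncomputable def ang (T Nx Ny : ℕ) (mq a : ℕ) : ℝ :=
  -(2 * Real.pi * mq * a) / ((T : ℝ) * Nx * Ny)

lemma dft_factor (T Nx Ny : ℕ) (hT : 0 < T) (hNx : 0 < Nx) (hNy : 0 < Ny)
    (q : Fin T × Fin Nx × Fin Ny) (t : Fin T) (u : Fin Nx) (v : Fin Ny) :
    dft T Nx Ny (t, u, v) q = (1 / (Real.sqrt ((T : ℝ) * Nx * Ny) : ℂ)) *
      (Complex.exp ((ang T Nx Ny (mIdx q) (v * Nx * T) : ℝ) * Complex.I) *
       Complex.exp ((ang T Nx Ny (mIdx q) (u * T) : ℝ) * Complex.I) *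
       Complex.exp ((ang T Nx Ny (mIdx q) t : ℝ) * Complex.I)) := by
  have hT' : (T : ℂ) ≠ 0 := Nat.cast_ne_zero.mpr hT.ne'
  have hNx' : (Nx : ℂ) ≠ 0 := Nat.cast_ne_zero.mpr hNx.ne'
  have hNy' : (Ny : ℂ) ≠ 0 := Nat.cast_ne_zero.mpr hNy.ne'
  show (1 / (Real.sqrt ((T : ℝ) * Nx * Ny) : ℂ)) *
      Complex.exp (-(Complex.I * (2 * (Real.pi : ℂ) * (mIdx q : ℕ) *
        (mIdx (t, u, v) : ℕ)) / ((T : ℂ) * Nx * Ny))) = _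
  congr 1
  rw [← Complex.exp_add, ← Complex.exp_add]
  congr 1
  simp only [mIdx, ang]
  push_cast
  ring

/-- Core estimate: the bound for a `1`-sparse vector `Pi.single q c`. -/
lemma norm_Fdot_single_le (T Nx Ny K : ℕ) (hT : 0 < T) (hNx : 0 < Nx) (hNy : 0 < Ny)
    (hK : 0 < K) (r : Fin Nx → Fin K → Fin T → ℝ)
    (hr : ∀ u k t, r u k t = 1 ∨ r u k t = -1)
    (q : Fin T × Fin Nx × Fin Ny) (c : ℂ) :
    ‖Fdot r (Pi.single q c)‖ ≤
      (1 / Real.sqrt ((K * Nx * Ny : ℕ) : ℝ)) * ‖c‖ *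
        ⨆ k : Fin K, ‖(RkMat r k).map Complex.ofReal‖ := by
  haveI : Nonempty (Fin K) := Fin.pos_iff_nonempty.mp hK
  have hb : BddAbove (Set.range fun k : Fin K => ‖(RkMat r k).map Complex.ofReal‖) :=
    Set.Finite.bddAbove (Set.finite_range _)
  set Csup := ⨆ k : Fin K, ‖(RkMat r k).map Complex.ofReal‖ with hCsup
  have hCsup0 : 0 ≤ Csup :=
    le_trans (norm_nonneg _) (le_ciSup hb (⟨0, hK⟩ : Fin K))
  have hTpos : (0 : ℝ) < Real.sqrt T := Real.sqrt_pos.mpr (by exact_mod_cast hT)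
  -- bound for each block
  have hblock : ∀ vk : Fin Ny × Fin K, ‖(Fvk r vk.1 vk.2 (Pi.single q c))ᴴ‖ ≤
      (1 / Real.sqrt ((T : ℝ) * Nx * Ny)) * ‖c‖ * (Real.sqrt T * Csup) := by
    rintro ⟨v, k⟩
    -- factor the block as scalar • (diagonal * sign-matrix * diagonal)
    have hfac : Fvk r v k (Pi.single q c) =
        ((1 / (Real.sqrt ((T : ℝ) * Nx * Ny) : ℂ)) *
          Complex.exp ((ang T Nx Ny (mIdx q) (v * Nx * T) : ℝ) * Complex.I) * c) •
        (Matrix.diagonal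
            (fun t : Fin T => Complex.exp ((ang T Nx Ny (mIdx q) t : ℝ) * Complex.I)) *
          Matrix.of (fun (t : Fin T) (u : Fin Nx) => ((r u k t : ℝ) : ℂ)) *
          Matrix.diagonal
            (fun u : Fin Nx => Complex.exp ((ang T Nx Ny (mIdx q) (u * T) : ℝ) * Complex.I))) := by
      ext t u
      simp only [Fvk, fdot, Psiuv, Matrix.of_apply, Matrix.mulVec_single,
        Matrix.smul_apply, Matrix.mul_diagonal, Matrix.diagonal_mul, smul_eq_mul]
      simp only [Pi.smul_apply, Matrix.col_apply, Matrix.of_apply, op_smul_eq_mul]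
      rw [dft_factor T Nx Ny hT hNx hNy q t u v]
      ring
    have hsign : (Matrix.of (fun (t : Fin T) (u : Fin Nx) => ((r u k t : ℝ) : ℂ))) =
        ((Real.sqrt T : ℝ) : ℂ) • (RkMat r k).map Complex.ofReal := by
      ext t u
      simp only [Matrix.of_apply, Matrix.smul_apply, Matrix.map_apply, RkMat, smul_eq_mul]
      rw [← Complex.ofReal_mul]
      congr 1
      field_simp
    calc ‖(Fvk r v k (Pi.single q c))ᴴ‖ = ‖Fvk r v k (Pi.single q c)‖ :=
          Matrix.l2_opNorm_conjTranspose _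
      _ = ‖(1 / (Real.sqrt ((T : ℝ) * Nx * Ny) : ℂ)) *
            Complex.exp ((ang T Nx Ny (mIdx q) (v * Nx * T) : ℝ) * Complex.I) * c‖ *
          ‖Matrix.diagonal
              (fun t : Fin T => Complex.exp ((ang T Nx Ny (mIdx q) t : ℝ) * Complex.I)) *
            Matrix.of (fun (t : Fin T) (u : Fin Nx) => ((r u k t : ℝ) : ℂ)) *
            Matrix.diagonal
              (fun u : Fin Nx => Complex.exp ((ang T Nx Ny (mIdx q) (u * T) : ℝ) * Complex.I))‖ := by
          rw [hfac, norm_smul]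
      _ ≤ ((1 / Real.sqrt ((T : ℝ) * Nx * Ny)) * ‖c‖) * (Real.sqrt T * Csup) := by
          have hz : ‖(1 / (Real.sqrt ((T : ℝ) * Nx * Ny) : ℂ)) *
              Complex.exp ((ang T Nx Ny (mIdx q) (v * Nx * T) : ℝ) * Complex.I) * c‖ =
              (1 / Real.sqrt ((T : ℝ) * Nx * Ny)) * ‖c‖ := by
            rw [norm_mul, norm_mul, Complex.norm_exp_ofReal_mul_I, mul_one, norm_div,
              norm_one, Complex.norm_real, Real.norm_eq_abs,
              abs_of_nonneg (Real.sqrt_nonneg _)]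
          rw [hz]
          have hDS : ‖Matrix.diagonal
              (fun t : Fin T => Complex.exp ((ang T Nx Ny (mIdx q) t : ℝ) * Complex.I)) *
            Matrix.of (fun (t : Fin T) (u : Fin Nx) => ((r u k t : ℝ) : ℂ)) *
            Matrix.diagonal
              (fun u : Fin Nx => Complex.exp ((ang T Nx Ny (mIdx q) (u * T) : ℝ) * Complex.I))‖
              ≤ Real.sqrt T * Csup := by
            have hD1 : ‖Matrix.diagonal
                (fun t : Fin T => Complex.exp ((ang T Nx Ny (mIdx q) t : ℝ) * Complex.I))‖ ≤ 1 :=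
              l2_opNorm_diagonal_le _ fun t => by rw [Complex.norm_exp_ofReal_mul_I]
            have hD2 : ‖Matrix.diagonal
                (fun u : Fin Nx => Complex.exp ((ang T Nx Ny (mIdx q) (u * T) : ℝ) * Complex.I))‖
                ≤ 1 :=
              l2_opNorm_diagonal_le _ fun u => by rw [Complex.norm_exp_ofReal_mul_I]
            have hSn : ‖Matrix.of (fun (t : Fin T) (u : Fin Nx) => ((r u k t : ℝ) : ℂ))‖ ≤
                Real.sqrt T * Csup := by
              rw [hsign, norm_smul, Complex.norm_real, Real.norm_eq_abs,
                abs_of_nonneg (Real.sqrt_nonneg _)]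
              exact mul_le_mul_of_nonneg_left (le_ciSup hb k) (Real.sqrt_nonneg _)
            calc ‖_ * _ * _‖ ≤ ‖_ * _‖ * ‖Matrix.diagonal
                  (fun u : Fin Nx =>
                    Complex.exp ((ang T Nx Ny (mIdx q) (u * T) : ℝ) * Complex.I))‖ :=
                  Matrix.l2_opNorm_mul _ _
              _ ≤ ‖_ * _‖ * 1 := by
                  exact mul_le_mul_of_nonneg_left hD2 (norm_nonneg _)
              _ = ‖_ * _‖ := mul_one _
              _ ≤ ‖Matrix.diagonal (fun t : Fin T =>
                    Complex.exp ((ang T Nx Ny (mIdx q) t : ℝ) * Complex.I))‖ *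
                  ‖Matrix.of (fun (t : Fin T) (u : Fin Nx) => ((r u k t : ℝ) : ℂ))‖ :=
                  Matrix.l2_opNorm_mul _ _
              _ ≤ 1 * (Real.sqrt T * Csup) := by
                  exact mul_le_mul hD1 hSn (norm_nonneg _) zero_le_one
              _ = Real.sqrt T * Csup := one_mul _
          refine mul_le_mul_of_nonneg_left hDS ?_
          positivity
      _ = (1 / Real.sqrt ((T : ℝ) * Nx * Ny)) * ‖c‖ * (Real.sqrt T * Csup) := by ring
  -- assemble through the block diagonal
  have hC0 : 0 ≤ (1 / Real.sqrt ((T : ℝ) * Nx * Ny)) * ‖c‖ * (Real.sqrt T * Csup) := by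
    positivity
  have hbd : ‖Matrix.blockDiagonal
      (fun vk : Fin Ny × Fin K => (Fvk r vk.1 vk.2 (Pi.single q c))ᴴ)‖ ≤
      (1 / Real.sqrt ((T : ℝ) * Nx * Ny)) * ‖c‖ * (Real.sqrt T * Csup) :=
    l2_opNorm_blockDiagonal_le _ hC0 hblock
  have hmain : ‖Fdot r (Pi.single q c)‖ ≤
      (1 / Real.sqrt K) * ((1 / Real.sqrt ((T : ℝ) * Nx * Ny)) * ‖c‖ * (Real.sqrt T * Csup)) := by
    unfold Fdot
    rw [norm_smul, Complex.norm_real, Real.norm_eq_abs, abs_of_nonneg (by positivity)]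
    exact mul_le_mul_of_nonneg_left hbd (by positivity)
  refine hmain.trans (le_of_eq ?_)
  have hsT : Real.sqrt ((T : ℝ) * Nx * Ny) = Real.sqrt T * Real.sqrt Nx * Real.sqrt Ny := by
    rw [Real.sqrt_mul (by positivity), Real.sqrt_mul (by positivity)]
  have hsK : Real.sqrt ((K * Nx * Ny : ℕ) : ℝ) = Real.sqrt K * Real.sqrt Nx * Real.sqrt Ny := by
    push_cast
    rw [Real.sqrt_mul (by positivity), Real.sqrt_mul (by positivity)]
  have hNxpos : (0 : ℝ) < Real.sqrt Nx := Real.sqrt_pos.mpr (by exact_mod_cast hNx)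
  have hNypos : (0 : ℝ) < Real.sqrt Ny := Real.sqrt_pos.mpr (by exact_mod_cast hNy)
  have hKpos : (0 : ℝ) < Real.sqrt K := Real.sqrt_pos.mpr (by exact_mod_cast hK)
  rw [hsT, hsK]
  field_simp

lemma Fdot_add {T Nx Ny K : ℕ} (r : Fin Nx → Fin K → Fin T → ℝ)
    (a b : Fin T × Fin Nx × Fin Ny → ℂ) : Fdot r (a + b) = Fdot r a + Fdot r b := by
  ext ⟨u, vk⟩ ⟨t, vk'⟩
  by_cases h : vk = vk' <;>
    simp [Fdot, Fvk, fdot, Matrix.blockDiagonal_apply, Matrix.conjTranspose_apply, h,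
      Matrix.mulVec_add, mul_add, star_add]

/-- For every fixed choice of signs `r_u^k(t) ∈ {−1,+1}` and every
`x ∈ Ω_S = {x ∈ ℂ^N : ‖x‖₀ ≤ S, ‖x‖₂ = 1}`,
`‖Ḟ(x)‖₂ ≤ √(S/M)·max_{1≤k≤K} ‖R^k‖₂`, where `M = K·Nx·Ny`. -/
theorem specNorm_Fdot_sparse_le (T Nx Ny K S : ℕ) (hT : 0 < T) (hNx : 0 < Nx)
    (hNy : 0 < Ny) (hK : 0 < K) (hS : 0 < S)
    (r : Fin Nx → Fin K → Fin T → ℝ)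
    (hr : ∀ u k t, r u k t = 1 ∨ r u k t = -1)
    (x : Fin T × Fin Nx × Fin Ny → ℂ)
    (hx0 : (Function.support x).ncard ≤ S)
    (hx2 : Real.sqrt (euclNormSq x) = 1) :
    specNorm (Fdot r x) ≤
      Real.sqrt ((S : ℝ) / ((K * Nx * Ny : ℕ) : ℝ)) *
        ⨆ k : Fin K, specNorm ((RkMat r k).map Complex.ofReal) := by
  classical
  haveI : Nonempty (Fin K) := Fin.pos_iff_nonempty.mp hK
  simp only [specNorm_eq_norm]
  have hb : BddAbove (Set.range fun k : Fin K => ‖(RkMat r k).map Complex.ofReal‖) :=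
    Set.Finite.bddAbove (Set.finite_range _)
  set Csup := ⨆ k : Fin K, ‖(RkMat r k).map Complex.ofReal‖ with hCsup
  have hCsup0 : 0 ≤ Csup :=
    le_trans (norm_nonneg _) (le_ciSup hb (⟨0, hK⟩ : Fin K))
  set s : Finset (Fin T × Fin Nx × Fin Ny) := Finset.univ.filter (fun q => x q ≠ 0) with hs
  have hxs : ∑ q ∈ s, Pi.single q (x q) = x := by
    rw [Finset.sum_subset (Finset.subset_univ s) (fun q _ hq => by
      simp only [hs, Finset.mem_filter, Finset.mem_univ, true_and, not_not] at hq
      simp [hq])]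
    exact Finset.univ_sum_single x
  have hsum : Fdot r x = ∑ q ∈ s, Fdot r (Pi.single q (x q)) := by
    conv_lhs => rw [← hxs]
    exact map_sum (AddMonoidHom.mk' (Fdot r) (Fdot_add r)) _ s
  have hE : euclNormSq x = 1 := Real.sqrt_eq_one.mp hx2
  have hcard : (s.card : ℝ) ≤ (S : ℝ) := by
    have hc : s.card = (Function.support x).ncard := by
      rw [← Set.ncard_coe_finset]
      congr 1
      ext q
      simp [hs, Function.mem_support]
    rw [hc]
    exact_mod_cast hx0
  have hsum2 : ∑ q ∈ s, ‖x q‖ ^ 2 ≤ 1 := by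
    calc ∑ q ∈ s, ‖x q‖ ^ 2 ≤ ∑ q, ‖x q‖ ^ 2 :=
          Finset.sum_le_sum_of_subset_of_nonneg (Finset.subset_univ s)
            (fun q _ _ => by positivity)
      _ = 1 := hE
  have hsums : ∑ q ∈ s, ‖x q‖ ≤ Real.sqrt S := by
    rw [show (Real.sqrt (S : ℝ)) = Real.sqrt (S : ℝ) from rfl]
    rw [Real.le_sqrt (Finset.sum_nonneg fun q _ => norm_nonneg _) (by positivity)]
    calc (∑ q ∈ s, ‖x q‖) ^ 2 ≤ (s.card : ℝ) * ∑ q ∈ s, ‖x q‖ ^ 2 :=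
          sq_sum_le_card_mul_sum_sq
      _ ≤ (S : ℝ) * 1 := by
          refine mul_le_mul hcard hsum2 (Finset.sum_nonneg fun q _ => by positivity)
            (by positivity)
      _ = (S : ℝ) := mul_one _
  have hMpos : (0 : ℝ) < ((K * Nx * Ny : ℕ) : ℝ) := by
    have : 0 < K * Nx * Ny := by positivity
    exact_mod_cast this
  calc ‖Fdot r x‖ ≤ ∑ q ∈ s, ‖Fdot r (Pi.single q (x q))‖ := by
        rw [hsum]; exact norm_sum_le s _
    _ ≤ ∑ q ∈ s, (1 / Real.sqrt ((K * Nx * Ny : ℕ) : ℝ)) * ‖x q‖ * Csup :=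
        Finset.sum_le_sum fun q _ =>
          norm_Fdot_single_le T Nx Ny K hT hNx hNy hK r hr q (x q)
    _ = (1 / Real.sqrt ((K * Nx * Ny : ℕ) : ℝ)) * Csup * ∑ q ∈ s, ‖x q‖ := by
        rw [Finset.mul_sum]
        exact Finset.sum_congr rfl fun q _ => by ring
    _ ≤ (1 / Real.sqrt ((K * Nx * Ny : ℕ) : ℝ)) * Csup * Real.sqrt S := by
        refine mul_le_mul_of_nonneg_left hsums ?_
        positivity
    _ = Real.sqrt ((S : ℝ) / ((K * Nx * Ny : ℕ) : ℝ)) * Csup := by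
        rw [Real.sqrt_div (by positivity) _]
        ring

end HFVcr
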